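/- Let R be a ring and X an R-module. Suppose V and W are submodules of X with direct sum decompositions into simple submodules V = V₁ ⊕ ⋯ ⊕ V_a and W = W₁ ⊕ ⋯ ⊕ W_b, and suppose V ∩ W is a direct summand of W as an R-module. Let I = { i ∈ {1,…,a} : ∃ j, V_i ≅ W_j as R-modules }. Then V ∩ W ⊆ ⊕_{i ∈ I} V_i. -/

import Mathlib

section Aux

variable {R : Type*} [Ring R] {M : Type*} [AddCommGroup M] [Module R M]

/-- If `M` is an internal direct sum of simple submodules `A i`, and `S` is a simple
submodule of `M` not isomorphic to any `A i` with `¬ P i`, then `S ≤ ⨆ i ∈ P, A i`. -/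
private theorem aux_le_biSup {ι : Type*} [DecidableEq ι] (A : ι → Submodule R M)
    (h : DirectSum.IsInternal A) (hA : ∀ i, IsSimpleModule R (A i))
    (S : Submodule R M) (hS : IsSimpleModule R S) (P : ι → Prop)
    (hiso : ∀ i, ¬ P i → IsEmpty (S ≃ₗ[R] A i)) :
    S ≤ ⨆ i, ⨆ _ : P i, A i := by
  classical
  set e := LinearEquiv.ofBijective (DirectSum.coeLinearMap A) h with he
  intro x hx
  set d := e.symm x with hd
  have hzero : ∀ i, ¬ P i → d i = 0 := by
    intro i hPi
    haveI := hS; haveI := hA i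
    set φ : S →ₗ[R] A i :=
      (DirectSum.component R ι (fun i => A i) i) ∘ₗ e.symm.toLinearMap ∘ₗ S.subtype with hφ
    rcases φ.bijective_or_eq_zero with hb | h0
    · exact ((hiso i hPi).false (LinearEquiv.ofBijective φ hb)).elim
    · have h1 : φ ⟨x, hx⟩ = 0 := by rw [h0]; rfl
      have h2 : d i = φ ⟨x, hx⟩ := rfl
      rw [h2, h1]
  have hxd : x = DirectSum.coeLinearMap A d := by
    rw [hd]; exact (e.apply_symm_apply x).symm
  rw [hxd, ← DirectSum.sum_support_of d, map_sum]
  refine Submodule.sum_mem _ fun i hi => ?_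
  have hPi : P i := by
    by_contra hP
    exact (DFinsupp.mem_support_iff.mp hi) (hzero i hP)
  rw [DirectSum.coeLinearMap_of]
  exact Submodule.mem_iSup_of_mem i (Submodule.mem_iSup_of_mem hPi (d i).2)

/-- In an internal direct sum of simple submodules, every simple submodule is isomorphic
to one of the factors. -/
private theorem aux_exists_iso {ι : Type*} [DecidableEq ι] (A : ι → Submodule R M)
    (h : DirectSum.IsInternal A) (hA : ∀ i, IsSimpleModule R (A i))
    (S : Submodule R M) (hS : IsSimpleModule R S) :
    ∃ i, Nonempty (S ≃ₗ[R] A i) := by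
  by_contra hc
  push_neg at hc
  have hle := aux_le_biSup A h hA S hS (fun _ => False)
    (fun i _ => hc i)
  simp only [iSup_false, iSup_bot] at hle
  have hbot : S = ⊥ := le_bot_iff.mp hle
  exact (isSimpleModule_iff_isAtom.mp hS).1 hbot

/-- An independent family of submodules gives an internal direct sum of their supremum. -/
private theorem aux_internal {ι : Type*} [DecidableEq ι] (f : ι → Submodule R M)
    (hf : iSupIndep f) :
    DirectSum.IsInternal (fun i => (f i).comap (⨆ i, f i).subtype) := by
  set T := ⨆ i, f i with hT
  have hle : ∀ i, f i ≤ T := fun i => le_iSup f i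
  have hmap : ∀ i, Submodule.map T.subtype ((f i).comap T.subtype) = f i := by
    intro i; rw [Submodule.map_comap_subtype, inf_of_le_right (hle i)]
  rw [DirectSum.isInternal_submodule_iff_iSupIndep_and_iSup_eq_top]
  constructor
  · intro i
    rw [disjoint_iff]
    apply Submodule.map_injective_of_injective T.injective_subtype
    rw [Submodule.map_inf _ T.injective_subtype, Submodule.map_bot]
    simp_rw [Submodule.map_iSup, hmap]
    exact disjoint_iff.mp (hf i)
  · apply Submodule.map_injective_of_injective T.injective_subtype
    rw [Submodule.map_iSup, Submodule.map_top, Submodule.range_subtype]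
    simp_rw [hmap]
    rfl

end Aux

/-- Lemma 3 of the paper: if `V = V₁ ⊕ ⋯ ⊕ V_a` and
`W = W₁ ⊕ ⋯ ⊕ W_b` are submodules of an `R`-module `X` decomposed into simple
submodules, and `V ⊓ W` is a direct summand of `W`, then
`V ⊓ W ⊆ ⊕_{i ∈ I} V_i` where `I = {i | ∃ j, V_i ≅ W_j}`. -/
theorem inf_le_iso_summands
    (R : Type*) [Ring R] (X : Type*) [AddCommGroup X] [Module R X]
    (V W : Submodule R X) (a b : ℕ)
    (Vf : Fin a → Submodule R X) (Wf : Fin b → Submodule R X)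
    (hVsimple : ∀ i, IsSimpleModule R (Vf i))
    (hWsimple : ∀ j, IsSimpleModule R (Wf j))
    (hVindep : iSupIndep Vf) (hWindep : iSupIndep Wf)
    (hV : V = ⨆ i, Vf i) (hW : W = ⨆ j, Wf j)
    (hsummand : ∃ U : Submodule R X, U ≤ W ∧ (V ⊓ W) ⊓ U = ⊥ ∧ (V ⊓ W) ⊔ U = W) :
    V ⊓ W ≤ ⨆ i ∈ {i : Fin a | ∃ j : Fin b, Nonempty (Vf i ≃ₗ[R] Wf j)}, Vf i := by
  classical
  subst hV hW
  set V := ⨆ i, Vf i with hV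
  set W := ⨆ j, Wf j with hW
  have hVle : ∀ i, Vf i ≤ V := fun i => le_iSup Vf i
  have hWle : ∀ j, Wf j ≤ W := fun j => le_iSup Wf j
  -- the comap families are simple
  have hWsimple' : ∀ j, IsSimpleModule R ((Wf j).comap W.subtype) := fun j => by
    haveI := hWsimple j
    exact IsSimpleModule.congr (Submodule.comapSubtypeEquivOfLe (hWle j))
  have hVsimple' : ∀ i, IsSimpleModule R ((Vf i).comap V.subtype) := fun i => by
    haveI := hVsimple i
    exact IsSimpleModule.congr (Submodule.comapSubtypeEquivOfLe (hVle i))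
  have internalW := aux_internal Wf hWindep
  have internalV := aux_internal Vf hVindep
  -- `W` is semisimple
  have htop : (⨆ j, (Wf j).comap W.subtype) = (⊤ : Submodule R W) := by
    apply Submodule.map_injective_of_injective W.injective_subtype
    rw [Submodule.map_iSup, Submodule.map_top, Submodule.range_subtype]
    conv_rhs => rw [hW]
    exact iSup_congr fun j => by
      rw [Submodule.map_comap_subtype, inf_of_le_right (hWle j)]
  haveI : IsSemisimpleModule R W := IsSemisimpleModule.of_sSup_simples_eq_top (by
    rw [eq_top_iff, ← htop]
    exact iSup_le fun j => le_sSup (hWsimple' j))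
  -- write `V ⊓ W` as a supremum of simple submodules
  set Q : Submodule R W := (V ⊓ W).comap W.subtype with hQ
  have hQmap : Submodule.map W.subtype Q = V ⊓ W := by
    rw [Submodule.map_comap_subtype, inf_of_le_right inf_le_right]
  rw [← hQmap, ← IsSemisimpleModule.sSup_simples_le Q, sSup_eq_iSup', Submodule.map_iSup]
  refine iSup_le ?_
  rintro ⟨m, hm_simple, hm_le⟩
  haveI := hm_simple
  set S := Submodule.map W.subtype m with hS
  have hSsimple : IsSimpleModule R S :=
    IsSimpleModule.congr (Submodule.equivMapOfInjective _ W.injective_subtype m).symm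
  have hSle : S ≤ V ⊓ W := hQmap ▸ Submodule.map_mono hm_le
  -- `S ≅ Wf j` for some `j`
  obtain ⟨j, ⟨ej⟩⟩ := aux_exists_iso _ internalW hWsimple' m hm_simple
  have eSm : S ≃ₗ[R] m := (Submodule.equivMapOfInjective _ W.injective_subtype m).symm
  have eSW : S ≃ₗ[R] Wf j :=
    eSm ≪≫ₗ ej ≪≫ₗ Submodule.comapSubtypeEquivOfLe (hWle j)
  -- now use the decomposition of `V`
  have hSleV : S ≤ V := hSle.trans inf_le_left
  set S' : Submodule R V := S.comap V.subtype with hS'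
  have hS'map : Submodule.map V.subtype S' = S := by
    rw [Submodule.map_comap_subtype, inf_of_le_right hSleV]
  have eS' : S' ≃ₗ[R] S := Submodule.comapSubtypeEquivOfLe hSleV
  have hS'simple : IsSimpleModule R S' := IsSimpleModule.congr eS'
  have key := aux_le_biSup _ internalV hVsimple' S' hS'simple
    (fun i => i ∈ {i : Fin a | ∃ j : Fin b, Nonempty (Vf i ≃ₗ[R] Wf j)})
    (fun i hPi => ⟨fun e =>
      hPi ⟨j, ⟨(Submodule.comapSubtypeEquivOfLe (hVle i)).symm ≪≫ₗ e.symm ≪≫ₗ eS' ≪≫ₗ eSW⟩⟩⟩)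
  calc Submodule.map W.subtype m = Submodule.map V.subtype S' := by rw [hS'map]
    _ ≤ Submodule.map V.subtype (⨆ i, ⨆ _ : i ∈ {i : Fin a | ∃ j : Fin b, Nonempty (Vf i ≃ₗ[R] Wf j)}, (Vf i).comap V.subtype) :=
        Submodule.map_mono key
    _ ≤ ⨆ i ∈ {i : Fin a | ∃ j : Fin b, Nonempty (Vf i ≃ₗ[R] Wf j)}, Vf i := by
        simp_rw [Submodule.map_iSup]
        exact iSup_mono fun i => iSup_mono fun hi => by
          rw [Submodule.map_comap_subtype, inf_of_le_right (hVle i)]
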